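/- Operator inequality for bipartite positive operators: Let ξ_AB be a positive semidefinite operator on H_A ⊗ H_B and ξ_B = tr_A(ξ_AB). Then ξ_AB ≤ |A| · (I_A ⊗ ξ_B) in the Loewner order. -/

import Mathlib

open scoped Kronecker ComplexOrder Classical
open Matrix MeasureTheory

noncomputable section

/-- Positive semidefinite square root (junk value `0` if not PSD). -/
def psqrt {n : Type*} [Fintype n] [DecidableEq n] (ρ : Matrix n n ℂ) : Matrix n n ℂ :=
  if h : ρ.PosSemidef then
    (h.1.eigenvectorUnitary : Matrix n n ℂ) *
      Matrix.diagonal ((↑) ∘ (Real.sqrt ·) ∘ h.1.eigenvalues) *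
      (star h.1.eigenvectorUnitary : Matrix n n ℂ)
  else 0

/-- Trace norm `‖M‖₁ = tr √(MᴴM)`. -/
def traceNorm {n : Type*} [Fintype n] [DecidableEq n] (M : Matrix n n ℂ) : ℝ :=
  (psqrt (Mᴴ * M)).trace.re

/-- Moore–Penrose real power of a Hermitian matrix via the spectral decomposition
(junk value `0` for non-Hermitian input).  For negative exponents, zero eigenvalues are
sent to zero (`Real.rpow` convention), i.e. inverses are generalized inverses. -/
def mpow {n : Type*} [Fintype n] [DecidableEq n] (ρ : Matrix n n ℂ) (p : ℝ) : Matrix n n ℂ :=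
  if h : ρ.IsHermitian then
    (h.eigenvectorUnitary : Matrix n n ℂ) *
      Matrix.diagonal (fun i => ((h.eigenvalues i ^ p : ℝ) : ℂ)) *
      (star h.eigenvectorUnitary : Matrix n n ℂ)
  else 0

/-- Subnormalized state: positive semidefinite with trace at most one. -/
def IsSubnormalized {n : Type*} [Fintype n] (ρ : Matrix n n ℂ) : Prop :=
  ρ.PosSemidef ∧ ρ.trace.re ≤ 1

/-- Normalized state: positive semidefinite with trace one. -/
def IsState {n : Type*} [Fintype n] (ρ : Matrix n n ℂ) : Prop :=
  ρ.PosSemidef ∧ ρ.trace = 1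

/-- Fidelity `F(ρ,σ) = ‖√ρ √σ‖₁`. -/
def fidelity {n : Type*} [Fintype n] [DecidableEq n] (ρ σ : Matrix n n ℂ) : ℝ :=
  traceNorm (psqrt ρ * psqrt σ)

/-- Generalized fidelity of subnormalized states. -/
def gFidelity {n : Type*} [Fintype n] [DecidableEq n] (ρ σ : Matrix n n ℂ) : ℝ :=
  fidelity ρ σ + Real.sqrt ((1 - ρ.trace.re) * (1 - σ.trace.re))

/-- Purified distance `P(ρ,σ) = √(1 − F̄(ρ,σ)²)`. -/
def pdist {n : Type*} [Fintype n] [DecidableEq n] (ρ σ : Matrix n n ℂ) : ℝ :=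
  Real.sqrt (1 - gFidelity ρ σ ^ 2)

/-- Partial trace over the first tensor factor. -/
def ptraceFst {a b : Type*} [Fintype a] (M : Matrix (a × b) (a × b) ℂ) : Matrix b b ℂ :=
  Matrix.of fun i j => ∑ k, M (k, i) (k, j)

/-- Partial trace over the second tensor factor. -/
def ptraceSnd {a b : Type*} [Fintype b] (M : Matrix (a × b) (a × b) ℂ) : Matrix a a ℂ :=
  Matrix.of fun i j => ∑ k, M (i, k) (j, k)

/-- Min-entropy `H_min(A|B)_ρ`, conditioning on the second factor. -/
def Hmin {a b : Type*} [Fintype a] [Fintype b] [DecidableEq a] [DecidableEq b]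
    (ρ : Matrix (a × b) (a × b) ℂ) : ℝ :=
  sSup {x : ℝ | ∃ σ : Matrix b b ℂ, IsState σ ∧
    (((2 : ℝ) ^ (-x) : ℝ) • ((1 : Matrix a a ℂ) ⊗ₖ σ) - ρ).PosSemidef}

/-- Max-entropy `H_max(A|B)_ρ`, conditioning on the second factor. -/
def Hmax {a b : Type*} [Fintype a] [Fintype b] [DecidableEq a] [DecidableEq b]
    (ρ : Matrix (a × b) (a × b) ℂ) : ℝ :=
  sSup {x : ℝ | ∃ σ : Matrix b b ℂ, IsState σ ∧
    x = Real.logb 2 (fidelity ρ ((1 : Matrix a a ℂ) ⊗ₖ σ) ^ 2)}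

/-- Smooth min-entropy `H_min^ε(A|B)_ρ`. -/
def sHmin {a b : Type*} [Fintype a] [Fintype b] [DecidableEq a] [DecidableEq b]
    (ε : ℝ) (ρ : Matrix (a × b) (a × b) ℂ) : ℝ :=
  sSup {x : ℝ | ∃ ρ' : Matrix (a × b) (a × b) ℂ,
    IsSubnormalized ρ' ∧ pdist ρ ρ' ≤ ε ∧ x = Hmin ρ'}

/-- Unconditional min-entropy `H_min(A)_ρ = −log‖ρ‖_∞`. -/
def HminU {n : Type*} [Fintype n] [DecidableEq n] (ρ : Matrix n n ℂ) : ℝ :=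
  -Real.logb 2 ‖Matrix.toEuclideanCLM (𝕜 := ℂ) ρ‖

/-- Unconditional max-entropy `H_max(A)_ρ = 2 log tr √ρ`. -/
def HmaxU {n : Type*} [Fintype n] [DecidableEq n] (ρ : Matrix n n ℂ) : ℝ :=
  2 * Real.logb 2 ((psqrt ρ).trace.re)

/-- Smooth unconditional min-entropy. -/
def sHminU {n : Type*} [Fintype n] [DecidableEq n] (ε : ℝ) (ρ : Matrix n n ℂ) : ℝ :=
  sSup {x : ℝ | ∃ ρ' : Matrix n n ℂ, IsSubnormalized ρ' ∧ pdist ρ ρ' ≤ ε ∧ x = HminU ρ'}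

/-- Smooth unconditional max-entropy. -/
def sHmaxU {n : Type*} [Fintype n] [DecidableEq n] (ε : ℝ) (ρ : Matrix n n ℂ) : ℝ :=
  sInf {x : ℝ | ∃ ρ' : Matrix n n ℂ, IsSubnormalized ρ' ∧ pdist ρ ρ' ≤ ε ∧ x = HmaxU ρ'}

/-- Collision entropy `H₂(A|B)_ρ`. -/
def H2 {a b : Type*} [Fintype a] [Fintype b] [DecidableEq a] [DecidableEq b]
    (ρ : Matrix (a × b) (a × b) ℂ) : ℝ :=
  sSup {x : ℝ | ∃ σ : Matrix b b ℂ, IsState σ ∧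
    x = -Real.logb 2
      (((((1 : Matrix a a ℂ) ⊗ₖ mpow σ (-(1/4))) * ρ *
          ((1 : Matrix a a ℂ) ⊗ₖ mpow σ (-(1/4)))) ^ 2).trace.re)}

/-- The extension `𝟙_n ⊗ T` of a linear map `T` on matrices, acting on the second factor. -/
def idTensorLmap {A B n : Type*} [Fintype A] [Fintype B] [Fintype n]
    (T : Matrix A A ℂ →ₗ[ℂ] Matrix B B ℂ) (M : Matrix (n × A) (n × A) ℂ) :
    Matrix (n × B) (n × B) ℂ :=
  Matrix.of fun i j => T (Matrix.of fun a a' => M (i.1, a) (j.1, a')) i.2 j.2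

/-- The extension `T ⊗ 𝟙_n` of a linear map `T` on matrices, acting on the first factor. -/
def lmapTensorId {A B n : Type*} [Fintype A] [Fintype B] [Fintype n]
    (T : Matrix A A ℂ →ₗ[ℂ] Matrix B B ℂ) (M : Matrix (A × n) (A × n) ℂ) :
    Matrix (B × n) (B × n) ℂ :=
  Matrix.of fun i j => T (Matrix.of fun a a' => M (a, i.2) (a', j.2)) i.1 j.1

/-- Complete positivity of a linear map on matrices. -/
def IsCPM {A B : Type*} [Fintype A] [Fintype B]
    (T : Matrix A A ℂ →ₗ[ℂ] Matrix B B ℂ) : Prop :=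
  ∀ (n : ℕ) (M : Matrix (Fin n × A) (Fin n × A) ℂ),
    M.PosSemidef → (idTensorLmap T M).PosSemidef

/-- The projector `|Φ⟩⟨Φ|` onto the maximally entangled state
`|Φ⟩ = |A|^{-1/2} ∑ₓ |x⟩|x⟩`. -/
def maxEntProj (A : Type*) [Fintype A] [DecidableEq A] : Matrix (A × A) (A × A) ℂ :=
  Matrix.of fun p q =>
    ((if p.1 = p.2 then 1 else 0) * (if q.1 = q.2 then 1 else 0)) / (Fintype.card A : ℂ)

/-- Choi–Jamiołkowski representation `J(T) = (𝟙_{A'} ⊗ T)(|Φ⟩⟨Φ|)`. -/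
def choi {A B : Type*} [Fintype A] [Fintype B] [DecidableEq A]
    (T : Matrix A A ℂ →ₗ[ℂ] Matrix B B ℂ) : Matrix (A × B) (A × B) ℂ :=
  idTensorLmap T (maxEntProj A)

/-- Conjugation of a bipartite operator by `U ⊗ 𝟙_E`. -/
def conjFst {A E : Type*} [Fintype A] [Fintype E] [DecidableEq A] [DecidableEq E]
    (U : Matrix.unitaryGroup A ℂ) (ρ : Matrix (A × E) (A × E) ℂ) :
    Matrix (A × E) (A × E) ℂ :=
  ((U : Matrix A A ℂ) ⊗ₖ (1 : Matrix E E ℂ)) * ρ *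
    (((U : Matrix A A ℂ)ᴴ) ⊗ₖ (1 : Matrix E E ℂ))

/-- The swap operator `F(u ⊗ v) = v ⊗ u` as a matrix. -/
def swapMat (A : Type*) [Fintype A] [DecidableEq A] : Matrix (A × A) (A × A) ℂ :=
  Matrix.of fun i j => if i.1 = j.2 ∧ i.2 = j.1 then 1 else 0


attribute [local instance] Matrix.frobeniusNormedAddCommGroup Matrix.frobeniusNormedSpace

lemma bipod_herm
    {A B : Type*} [Fintype A] [DecidableEq A] [Fintype B] [DecidableEq B]
    (ξ : Matrix (A × B) (A × B) ℂ) (hξ : ξ.PosSemidef) :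
    ((Fintype.card A : ℂ) • ((1 : Matrix A A ℂ) ⊗ₖ ptraceFst ξ)).IsHermitian := by
  have hP : (ptraceFst ξ).IsHermitian := by
    ext i j
    simp only [ptraceFst, Matrix.conjTranspose_apply, Matrix.of_apply, star_sum]
    exact Finset.sum_congr rfl fun k _ => hξ.1.apply _ _
  have hK : ((1 : Matrix A A ℂ) ⊗ₖ ptraceFst ξ).IsHermitian := by
    ext ⟨a, b⟩ ⟨a', b'⟩
    simp only [Matrix.conjTranspose_apply, Matrix.kroneckerMap_apply, star_mul',
      Matrix.one_apply]
    by_cases h : a = a'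
    · subst h
      simpa using hP.apply b b'
    · simp [h, Ne.symm h]
  unfold Matrix.IsHermitian
  rw [Matrix.conjTranspose_smul, hK]
  norm_num

/-- **Operator inequality for bipartite positive operators:** `ξ_AB ≤ |A| · (I_A ⊗ ξ_B)`. -/
theorem bipartite_operator_inequality
    {A B : Type*} [Fintype A] [DecidableEq A] [Fintype B] [DecidableEq B]
    (ξ : Matrix (A × B) (A × B) ℂ) (hξ : ξ.PosSemidef) :
    ((Fintype.card A : ℂ) • ((1 : Matrix A A ℂ) ⊗ₖ ptraceFst ξ) - ξ).PosSemidef := by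
  obtain ⟨S, hSS⟩ : ∃ S : Matrix (A × B) (A × B) ℂ, ξ = star S * S := by
    open scoped MatrixOrder Matrix.Norms.L2Operator in
    exact CStarAlgebra.nonneg_iff_eq_star_mul_self.mp hξ.nonneg
  have key : ∀ u : A × B → ℂ,
      dotProduct (star u) (ξ *ᵥ u) = dotProduct (star (S *ᵥ u)) (S *ᵥ u) := by
    intro u
    rw [Matrix.star_mulVec, ← Matrix.dotProduct_mulVec,
      Matrix.mulVec_mulVec, ← Matrix.star_eq_conjTranspose, ← hSS]
  have nrm : ∀ w : A × B → ℂ,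
      dotProduct (star w) w = ((∑ i, Complex.normSq (w i) : ℝ) : ℂ) := by
    intro w
    simp only [dotProduct, Pi.star_apply, Complex.ofReal_sum]
    refine Finset.sum_congr rfl fun i _ => ?_
    rw [Complex.star_def, ← Complex.normSq_eq_conj_mul_self]
  refine Matrix.PosSemidef.of_dotProduct_mulVec_nonneg ((bipod_herm ξ hξ).sub hξ.1) fun x => ?_
  classical
  set y : A → A → (A × B → ℂ) :=
    fun a k p => if p.1 = k then x (a, p.2) else 0 with hy
  have hxy : (∑ a, y a a) = x := by
    funext p
    simp only [Finset.sum_apply, hy]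
    rw [Finset.sum_ite_eq Finset.univ p.1 (fun a => x (a, p.2))]
    simp
  set g : A → A → (A × B → ℂ) := fun a k => S *ᵥ y a k with hg
  -- computation of ξ *ᵥ (y a k)
  have hyv : ∀ a k, ξ *ᵥ y a k = fun q => ∑ b', ξ q (k, b') * x (a, b') := by
    intro a k
    funext q
    simp only [Matrix.mulVec, dotProduct, Fintype.sum_prod_type, hy, mul_ite, mul_zero]
    rw [Finset.sum_comm]
    refine Finset.sum_congr rfl fun b' _ => ?_
    rw [Finset.sum_ite_eq' Finset.univ k (fun a' => ξ q (a', b') * x (a, b'))]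
    simp
  -- quadratic form of ξ at y a k
  have h1 : ∀ a k, dotProduct (star (y a k)) (ξ *ᵥ y a k)
      = ∑ b, ∑ b', star (x (a, b)) * (ξ (k, b) (k, b') * x (a, b')) := by
    intro a k
    rw [hyv a k]
    simp only [dotProduct, Pi.star_apply, hy, Fintype.sum_prod_type, apply_ite (star : ℂ → ℂ),
      star_zero, ite_mul, zero_mul]
    rw [Finset.sum_comm]
    refine Finset.sum_congr rfl fun b _ => ?_
    rw [Finset.sum_ite_eq' Finset.univ k
      (fun a' => star (x (a, b)) * ∑ b', ξ (a', b) (k, b') * x (a, b'))]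
    simp only [Finset.mem_univ, if_true]
    rw [Finset.mul_sum]
  -- quadratic form of the Kronecker part
  have hmv : ((1 : Matrix A A ℂ) ⊗ₖ ptraceFst ξ) *ᵥ x
      = fun p => ∑ b', (∑ k, ξ (k, p.2) (k, b')) * x (p.1, b') := by
    funext p
    simp only [Matrix.mulVec, dotProduct, Matrix.kroneckerMap_apply, Matrix.one_apply,
      ptraceFst, Matrix.of_apply, Fintype.sum_prod_type, ite_mul, one_mul, zero_mul]
    rw [Finset.sum_comm]
    refine Finset.sum_congr rfl fun b' _ => ?_
    rw [Finset.sum_ite_eq Finset.univ p.1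
      (fun a' => (∑ k, ξ (k, p.2) (k, b')) * x (a', b'))]
    simp
  have hQ : dotProduct (star x) (((1 : Matrix A A ℂ) ⊗ₖ ptraceFst ξ) *ᵥ x)
      = ∑ a, ∑ k, dotProduct (star (y a k)) (ξ *ᵥ y a k) := by
    have hRHS : (∑ a, ∑ k, dotProduct (star (y a k)) (ξ *ᵥ y a k))
        = ∑ a, ∑ k, ∑ b, ∑ b', star (x (a, b)) * (ξ (k, b) (k, b') * x (a, b')) :=
      Finset.sum_congr rfl fun a _ => Finset.sum_congr rfl fun k _ => h1 a k
    rw [hRHS, hmv]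
    simp only [dotProduct, Pi.star_apply, Fintype.sum_prod_type]
    refine Finset.sum_congr rfl fun a _ => ?_
    calc (∑ b, star (x (a, b)) * ∑ b', (∑ k, ξ (k, b) (k, b')) * x (a, b'))
        = ∑ b, ∑ k, ∑ b', star (x (a, b)) * (ξ (k, b) (k, b') * x (a, b')) := by
          refine Finset.sum_congr rfl fun b _ => ?_
          rw [Finset.mul_sum]
          rw [show (∑ b', star (x (a, b)) * ((∑ k, ξ (k, b) (k, b')) * x (a, b')))
              = ∑ b', ∑ k, star (x (a, b)) * (ξ (k, b) (k, b') * x (a, b')) from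
            Finset.sum_congr rfl fun b' _ => by rw [Finset.sum_mul, Finset.mul_sum]]
          exact Finset.sum_comm
      _ = ∑ k, ∑ b, ∑ b', star (x (a, b)) * (ξ (k, b) (k, b') * x (a, b')) :=
          Finset.sum_comm
  have hR : dotProduct (star x) (ξ *ᵥ x)
      = ((∑ i, Complex.normSq ((∑ a, g a a) i) : ℝ) : ℂ) := by
    have hsx : S *ᵥ x = ∑ a, g a a := by
      rw [← hxy]
      simpa only [Matrix.mulVecLin_apply] using
        map_sum (Matrix.mulVecLin S) (fun a => y a a) Finset.univ
    rw [key, hsx, nrm]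
  have hQ' : dotProduct (star x) (((1 : Matrix A A ℂ) ⊗ₖ ptraceFst ξ) *ᵥ x)
      = ((∑ a, ∑ k, ∑ i, Complex.normSq (g a k i) : ℝ) : ℂ) := by
    rw [hQ, Complex.ofReal_sum]
    refine Finset.sum_congr rfl fun a _ => ?_
    rw [Complex.ofReal_sum]
    refine Finset.sum_congr rfl fun k _ => ?_
    rw [key, nrm]
  -- the real inequality
  have main : (∑ i, Complex.normSq ((∑ a, g a a) i))
      ≤ (Fintype.card A : ℝ) * ∑ a, ∑ k, ∑ i, Complex.normSq (g a k i) := by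
    have pt : ∀ i : A × B, Complex.normSq ((∑ a, g a a) i)
        ≤ (Fintype.card A : ℝ) * ∑ a, Complex.normSq (g a a i) := by
      intro i
      simp only [Finset.sum_apply]
      calc Complex.normSq (∑ a, g a a i)
          = ‖∑ a, g a a i‖ ^ 2 := (Complex.sq_norm _).symm
        _ ≤ (∑ a, ‖g a a i‖) ^ 2 := by
            have h0 : (0 : ℝ) ≤ ‖∑ a, g a a i‖ := norm_nonneg _
            have h1 : ‖∑ a, g a a i‖ ≤ ∑ a, ‖g a a i‖ :=
              norm_sum_le _ _
            nlinarith
        _ ≤ (Finset.univ.card : ℝ) * ∑ a, ‖g a a i‖ ^ 2 :=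
            sq_sum_le_card_mul_sum_sq
        _ = (Fintype.card A : ℝ) * ∑ a, Complex.normSq (g a a i) := by
            simp [Complex.sq_norm, Finset.card_univ]
    have step1 : (∑ i, Complex.normSq ((∑ a, g a a) i))
        ≤ (Fintype.card A : ℝ) * ∑ a, ∑ i, Complex.normSq (g a a i) :=
      calc (∑ i, Complex.normSq ((∑ a, g a a) i))
          ≤ ∑ i : A × B, (Fintype.card A : ℝ) * ∑ a, Complex.normSq (g a a i) :=
            Finset.sum_le_sum fun i _ => pt i
        _ = (Fintype.card A : ℝ) * ∑ i : A × B, ∑ a, Complex.normSq (g a a i) :=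
            (Finset.mul_sum _ _ _).symm
        _ = (Fintype.card A : ℝ) * ∑ a, ∑ i, Complex.normSq (g a a i) := by
            rw [Finset.sum_comm]
    refine step1.trans (mul_le_mul_of_nonneg_left ?_ (by positivity))
    refine Finset.sum_le_sum fun a _ => ?_
    exact Finset.single_le_sum (f := fun k => ∑ i, Complex.normSq (g a k i))
      (fun k _ => Finset.sum_nonneg fun i _ => Complex.normSq_nonneg _)
      (Finset.mem_univ a)
  rw [Matrix.sub_mulVec, dotProduct_sub, Matrix.smul_mulVec, dotProduct_smul,
    hQ', hR]
  have hcast : ((Fintype.card A : ℂ)) • ((∑ a, ∑ k, ∑ i, Complex.normSq (g a k i) : ℝ) : ℂ)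
      - ((∑ i, Complex.normSq ((∑ a, g a a) i) : ℝ) : ℂ)
      = (((Fintype.card A : ℝ) * (∑ a, ∑ k, ∑ i, Complex.normSq (g a k i))
          - ∑ i, Complex.normSq ((∑ a, g a a) i) : ℝ) : ℂ) := by
    rw [smul_eq_mul]
    push_cast
    ring
  rw [hcast, Complex.zero_le_real]
  linarith

end
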